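/- Let c ≥ 2 be an integer and n = (c^l − 1)/(c − 1), and identify [n] with the nodes of the complete c-ary tree of depth l. There exists a constant c' such that for every subset S ⊆ [n] with |S| = k ≤ n/2, there is a subset T ⊆ [n] with S ⊆ T, T containing the root and connected in the tree (closed under taking parents), and |T| ≤ c'·k·log(n/k). -/

import Mathlib

open scoped Classical BigOperators

def RootedSubtree {n : ℕ} (c : ℕ) (T : Finset (Fin n)) : Prop :=
  (∀ v : Fin n, (v : ℕ) = 0 → v ∈ T) ∧
  ∀ v ∈ T, ∀ w : Fin n, (v : ℕ) ≠ 0 → (w : ℕ) = ((v : ℕ) - 1) / c → w ∈ T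

private lemma iter_le_self (c : ℕ) (j v : ℕ) :
    (fun x => (x - 1) / c)^[j] v ≤ v := by
  induction j generalizing v with
  | zero => simp
  | succ j ih =>
    rw [Function.iterate_succ_apply]
    exact le_trans (ih _) (le_trans (Nat.div_le_self _ _) (Nat.sub_le _ _))

private lemma iter_le_div (c : ℕ) (j v : ℕ) :
    (fun x => (x - 1) / c)^[j] v ≤ v / c ^ j := by
  induction j with
  | zero => simp
  | succ j ih =>
    rw [Function.iterate_succ_apply']
    calc ((fun x => (x - 1) / c)^[j] v - 1) / c
        ≤ (fun x => (x - 1) / c)^[j] v / c :=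
          Nat.div_le_div_right (Nat.sub_le _ _)
      _ ≤ v / c ^ j / c := Nat.div_le_div_right ih
      _ = v / c ^ (j + 1) := by rw [Nat.div_div_eq_div_mul, pow_succ]

theorem stmt7 :
    ∃ c' : ℝ, 0 < c' ∧
      ∀ (c l n k : ℕ), 2 ≤ c → n = (c^l - 1) / (c - 1) → 1 ≤ k → 2 * k ≤ n →
        ∀ S : Finset (Fin n), S.card = k →
          ∃ T : Finset (Fin n), S ⊆ T ∧ RootedSubtree c T ∧
            (T.card : ℝ) ≤ c' * k * Real.log ((n : ℝ) / k) := by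
  refine ⟨5 / Real.log 2, by positivity, ?_⟩
  intro c l n k hc hn hk hkn S hS
  set f : ℕ → ℕ := fun x => (x - 1) / c with hf
  have hk0 : 0 < k := hk
  have hn0 : 0 < n := lt_of_lt_of_le (by omega) hkn
  set m : ℕ := n / k with hm
  have hm2 : 2 ≤ m := (Nat.le_div_iff_mul_le hk0).2 (by omega)
  set j0 : ℕ := Nat.log c m + 1 with hj0
  -- the set T : ancestor closure of S plus root
  refine ⟨Finset.univ.filter
    (fun w : Fin n => (w : ℕ) = 0 ∨ ∃ s ∈ S, ∃ j, (w : ℕ) = f^[j] (s : ℕ)),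
    ?_, ⟨?_, ?_⟩, ?_⟩
  · intro s hs
    simp only [Finset.mem_filter, Finset.mem_univ, true_and]
    exact Or.inr ⟨s, hs, 0, rfl⟩
  · intro v hv
    simp only [Finset.mem_filter, Finset.mem_univ, true_and]
    exact Or.inl hv
  · intro v hv w hv0 hw
    simp only [Finset.mem_filter, Finset.mem_univ, true_and] at hv ⊢
    rcases hv with hv | ⟨s, hs, j, hj⟩
    · exact absurd hv hv0
    · refine Or.inr ⟨s, hs, j + 1, ?_⟩
      rw [Function.iterate_succ_apply', ← hj]
      exact hw
  · -- cardinality bound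
    have hcpos : 0 < c := by omega
    have hpow : 0 < c ^ j0 := Nat.pow_pos hcpos
    -- n < (m+1) * k ≤ c^j0 * k
    have hnm : n < c ^ j0 * k := by
      have h1 : n < (m + 1) * k := (Nat.div_lt_iff_lt_mul hk0).1 (by omega)
      have h2 : m + 1 ≤ c ^ j0 := Nat.lt_pow_succ_log_self (by omega) m
      exact lt_of_lt_of_le h1 (Nat.mul_le_mul_right _ h2)
    -- cover set
    set U : Finset (Fin n) :=
      (Finset.univ.filter fun w : Fin n => (w : ℕ) < k) ∪
        S.biUnion (fun s => (Finset.range j0).image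
          (fun j => (⟨f^[j] (s : ℕ), lt_of_le_of_lt (iter_le_self c j _) s.2⟩ : Fin n))) with hU
    have hsub : Finset.univ.filter
        (fun w : Fin n => (w : ℕ) = 0 ∨ ∃ s ∈ S, ∃ j, (w : ℕ) = f^[j] (s : ℕ)) ⊆ U := by
      intro w hw
      simp only [Finset.mem_filter, Finset.mem_univ, true_and] at hw
      rcases hw with hw | ⟨s, hs, j, hj⟩
      · exact Finset.mem_union_left _ (by simp [hw, hk0])
      · rcases lt_or_ge j j0 with hjlt | hjge
        · refine Finset.mem_union_right _ (Finset.mem_biUnion.2 ⟨s, hs, ?_⟩)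
          refine Finset.mem_image.2 ⟨j, Finset.mem_range.2 hjlt, ?_⟩
          exact Fin.ext hj.symm
        · refine Finset.mem_union_left _ ?_
          simp only [Finset.mem_filter, Finset.mem_univ, true_and]
          have h1 : (w : ℕ) ≤ (s : ℕ) / c ^ j := hj ▸ iter_le_div c j _
          have h2 : (s : ℕ) / c ^ j ≤ (s : ℕ) / c ^ j0 :=
            Nat.div_le_div_left (Nat.pow_le_pow_right hcpos hjge) hpow
          have h3 : (s : ℕ) / c ^ j0 < k :=
            (Nat.div_lt_iff_lt_mul hpow).2 (lt_of_lt_of_le s.2 (le_of_lt (by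
              calc n < c ^ j0 * k := hnm
                _ = k * c ^ j0 := Nat.mul_comm _ _)))
          omega
    have hcard : (Finset.univ.filter
        (fun w : Fin n => (w : ℕ) = 0 ∨ ∃ s ∈ S, ∃ j, (w : ℕ) = f^[j] (s : ℕ))).card
        ≤ k + k * j0 := by
      refine le_trans (Finset.card_le_card hsub) (le_trans (Finset.card_union_le _ _) ?_)
      have hA : (Finset.univ.filter fun w : Fin n => (w : ℕ) < k).card ≤ k := by
        have : (Finset.univ.filter fun w : Fin n => (w : ℕ) < k).card
            ≤ (Finset.range k).card :=
          Finset.card_le_card_of_injOn (fun w : Fin n => (w : ℕ))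
            (fun w hw => Finset.mem_range.2 (Finset.mem_filter.1 hw).2)
            (fun a _ b _ h => Fin.ext h)
        exact le_trans this (le_of_eq (Finset.card_range k))
      have hB : (S.biUnion (fun s => (Finset.range j0).image
          (fun j => (⟨f^[j] (s : ℕ), lt_of_le_of_lt (iter_le_self c j _) s.2⟩ : Fin n)))).card
          ≤ k * j0 := by
        refine le_trans (Finset.card_biUnion_le) ?_
        calc ∑ s ∈ S, ((Finset.range j0).image _).card
            ≤ ∑ _s ∈ S, j0 :=
              Finset.sum_le_sum (fun s _ => le_trans (Finset.card_image_le) (by simp))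
          _ = k * j0 := by rw [Finset.sum_const, hS, smul_eq_mul]
      omega
    -- real analysis
    have hlog2 : (0:ℝ) < Real.log 2 := Real.log_pos (by norm_num)
    set L : ℝ := Real.log ((n : ℝ) / k) with hL
    have hnk2 : (2:ℝ) ≤ (n : ℝ) / k := by
      rw [le_div_iff₀ (by exact_mod_cast hk0)]
      exact_mod_cast by omega
    have hLlog2 : Real.log 2 ≤ L := Real.log_le_log (by norm_num) hnk2
    have hL0 : 0 < L := lt_of_lt_of_le hlog2 hLlog2
    -- Nat.log c m ≤ L / log 2
    have hlogc : (Nat.log c m : ℝ) * Real.log 2 ≤ L := by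
      have h1 : Nat.log c m ≤ Nat.log 2 m := Nat.log_anti_left (by norm_num : 1 < 2) hc
      have h2 : (2:ℕ) ^ Nat.log 2 m ≤ m := Nat.pow_log_le_self 2 (by omega)
      have h3 : ((2:ℝ)) ^ (Nat.log 2 m) ≤ (n : ℝ) / k := by
        have hmn : (m : ℝ) ≤ (n : ℝ) / k := by
          rw [le_div_iff₀ (by exact_mod_cast hk0)]
          exact_mod_cast Nat.div_mul_le_self n k
        calc ((2:ℝ)) ^ (Nat.log 2 m) = ((2 ^ Nat.log 2 m : ℕ) : ℝ) := by push_cast; ring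
          _ ≤ (m : ℝ) := by exact_mod_cast h2
          _ ≤ _ := hmn
      have h4 : (Nat.log 2 m : ℝ) * Real.log 2 ≤ L := by
        have := Real.log_le_log (by positivity) h3
        rwa [Real.log_pow] at this
      calc (Nat.log c m : ℝ) * Real.log 2 ≤ (Nat.log 2 m : ℝ) * Real.log 2 := by
            apply mul_le_mul_of_nonneg_right _ (le_of_lt hlog2)
            exact_mod_cast h1
        _ ≤ L := h4
    have hcard' : ((Finset.univ.filter
        (fun w : Fin n => (w : ℕ) = 0 ∨ ∃ s ∈ S, ∃ j, (w : ℕ) = f^[j] (s : ℕ))).card : ℝ)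
        ≤ (k : ℝ) * (2 + Nat.log c m) := by
      have : ((k + k * j0 : ℕ) : ℝ) = (k : ℝ) * (2 + Nat.log c m) := by
        push_cast [hj0]; ring
      exact le_trans (by exact_mod_cast hcard) (le_of_eq this)
    refine le_trans hcard' ?_
    have hkR : (0:ℝ) ≤ (k:ℝ) := Nat.cast_nonneg k
    have h5 : (2 : ℝ) + Nat.log c m ≤ 5 / Real.log 2 * L := by
      have e1 : (2:ℝ) ≤ 2 * (L / Real.log 2) := by
        rw [le_mul_iff_one_le_right (by norm_num)]
        rw [le_div_iff₀ hlog2]; linarith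
      have e2 : (Nat.log c m : ℝ) ≤ L / Real.log 2 := by
        rw [le_div_iff₀ hlog2]; exact hlogc
      have : (2:ℝ) + Nat.log c m ≤ 3 * (L / Real.log 2) := by linarith
      have hq : (0:ℝ) ≤ L / Real.log 2 := by positivity
      calc (2:ℝ) + Nat.log c m ≤ 3 * (L / Real.log 2) := this
        _ ≤ 5 * (L / Real.log 2) := by linarith
        _ = 5 / Real.log 2 * L := by ring
    calc (k : ℝ) * (2 + Nat.log c m) ≤ (k:ℝ) * (5 / Real.log 2 * L) :=
          mul_le_mul_of_nonneg_left h5 hkR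
      _ = 5 / Real.log 2 * k * L := by ring
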